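/- arXiv:1710.03411 — 3 statements merged into one kernel-verified Lean document; each statement's English description precedes it below -/
import Mathlib

section
/- Let X be a uniquely arcwise connected continuum, let φ : [0, ∞) → X be a continuous injection with image R = φ([0, ∞)), and suppose there is an arc [a, b] in X such that φ(0) lies in (a, b) = [a, b] − {a, b}. Then R can be extended to a line in X; that is, there is a continuous injection ψ : (−∞, ∞) → X with ψ(t) = φ(t) for all t ∈ [0, ∞). -/
/-- `A` is an arc in `X` joining `x` and `y`: the image of a continuous injection
from `[0,1]` sending `0` to `x` and `1` to `y`. -/
def IsArcBetween {X : Type*} [TopologicalSpace X] (A : Set X) (x y : X) : Prop :=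
  ∃ f : unitInterval → X, Continuous f ∧ Function.Injective f ∧
    f 0 = x ∧ f 1 = y ∧ Set.range f = A

/-- `A` is an arc in `X` (a subspace homeomorphic to `[0,1]`). -/
def IsArc {X : Type*} [TopologicalSpace X] (A : Set X) : Prop :=
  ∃ x y, IsArcBetween A x y

/-- `X` is uniquely arcwise connected: any two distinct points are joined by a unique arc. -/
def UniquelyArcwiseConnected (X : Type*) [TopologicalSpace X] : Prop :=
  ∀ x y : X, x ≠ y → ∃! A : Set X, IsArcBetween A x y

open Set Real

/-- An injective continuous map on a nondegenerate interval gives an arc. -/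
lemma isArcBetween_of_injOn {X : Type*} [TopologicalSpace X] (F : ℝ → X) (c d : ℝ)
    (hcd : c < d) (hc : ContinuousOn F (Icc c d)) (hi : InjOn F (Icc c d)) :
    IsArcBetween (F '' Icc c d) (F c) (F d) := by
  have hemem : ∀ u : unitInterval, c + (u : ℝ) * (d - c) ∈ Icc c d := by
    intro u
    constructor
    · nlinarith [u.2.1, u.2.2]
    · nlinarith [u.2.1, u.2.2]
  have hec : Continuous (fun u : unitInterval => c + (u : ℝ) * (d - c)) := by
    apply Continuous.add continuous_const
    exact (continuous_subtype_val.mul continuous_const)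
  refine ⟨fun u => F (c + (u : ℝ) * (d - c)), hc.comp_continuous hec hemem, ?_, ?_, ?_, ?_⟩
  · intro u v huv
    have h1 : c + (u:ℝ) * (d - c) = c + (v:ℝ) * (d - c) := hi (hemem u) (hemem v) huv
    have hdc : d - c ≠ 0 := by linarith
    have h2 : (u : ℝ) = (v : ℝ) :=
      mul_right_cancel₀ hdc (by linarith : (u:ℝ) * (d-c) = (v:ℝ) * (d-c))
    exact Subtype.ext h2
  · show F (c + ((0:ℝ)) * (d - c)) = F c
    congr 1; ring
  · show F (c + ((1:ℝ)) * (d - c)) = F d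
    congr 1; ring
  · ext x
    constructor
    · rintro ⟨u, rfl⟩
      exact ⟨c + (u:ℝ) * (d - c), hemem u, rfl⟩
    · rintro ⟨y, hy, rfl⟩
      have hdc : (0:ℝ) < d - c := by linarith
      refine ⟨⟨(y - c) / (d - c), ⟨div_nonneg (by linarith [hy.1]) hdc.le, ?_⟩⟩, ?_⟩
      · rw [div_le_one hdc]; linarith [hy.2]
      · show F (c + (y - c) / (d - c) * (d - c)) = F y
        congr 1
        field_simp
        ring

/-- Arcs can be reversed. -/
lemma IsArcBetween.symm {X : Type*} [TopologicalSpace X] {A : Set X} {x y : X}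
    (h : IsArcBetween A x y) : IsArcBetween A y x := by
  obtain ⟨f, hfc, hfi, hf0, hf1, hfr⟩ := h
  have hinv : Function.Involutive (unitInterval.symm) := unitInterval.symm_symm
  refine ⟨f ∘ unitInterval.symm, hfc.comp unitInterval.continuous_symm,
    hfi.comp hinv.injective, ?_, ?_, ?_⟩
  · simpa [unitInterval.symm_zero] using hf1
  · simpa [unitInterval.symm_one] using hf0
  · rw [hinv.surjective.range_comp]
    exact hfr

/-- Gluing a ray with a free half-open arc into a line. -/
lemma build_line {X : Type*} [TopologicalSpace X]
    (φ : ℝ → X) (hφc : ContinuousOn φ (Ici 0)) (hφi : InjOn φ (Ici 0))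
    (G : ℝ → X) (hGc : Continuous G) (hGi : InjOn G (Ioc 0 1)) (hG1 : G 1 = φ 0)
    (hdisj : ∀ s ∈ Ioo (0:ℝ) 1, ∀ t : ℝ, 0 ≤ t → G s ≠ φ t) :
    ∃ ψ : ℝ → X, Continuous ψ ∧ Function.Injective ψ ∧
      ∀ t : ℝ, 0 ≤ t → ψ t = φ t := by
  have hmax : ∀ x : ℝ, max x 0 ∈ Ici (0:ℝ) := fun x => mem_Ici.mpr (le_max_right _ _)
  have hφ'c : Continuous (fun t => φ (max t 0)) :=
    hφc.comp_continuous (continuous_id.max continuous_const) hmax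
  have hexp : ∀ t : ℝ, t < 0 → exp t ∈ Ioo (0:ℝ) 1 :=
    fun t ht => ⟨exp_pos t, by rwa [exp_lt_one_iff]⟩
  refine ⟨fun t => if (0:ℝ) ≤ t then φ (max t 0) else G (exp t), ?_, ?_, ?_⟩
  · apply Continuous.if_le hφ'c (hGc.comp continuous_exp) continuous_const continuous_id
    intro x hx
    simp only [id] at hx
    rw [← hx]
    simp [hG1]
  · intro u v huv
    dsimp only at huv
    rcases le_or_gt 0 u with hu | hu <;> rcases le_or_gt 0 v with hv | hv
    · rw [if_pos hu, if_pos hv] at huv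
      have := hφi (hmax u) (hmax v) huv
      rwa [max_eq_left hu, max_eq_left hv] at this
    · rw [if_pos hu, if_neg (not_le.mpr hv)] at huv
      exact absurd huv.symm (hdisj _ (hexp v hv) (max u 0) (hmax u))
    · rw [if_neg (not_le.mpr hu), if_pos hv] at huv
      exact absurd huv (hdisj _ (hexp u hu) (max v 0) (hmax v))
    · rw [if_neg (not_le.mpr hu), if_neg (not_le.mpr hv)] at huv
      have h1 : exp u ∈ Ioc (0:ℝ) 1 := ⟨(hexp u hu).1, (hexp u hu).2.le⟩
      have h2 : exp v ∈ Ioc (0:ℝ) 1 := ⟨(hexp v hv).1, (hexp v hv).2.le⟩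
      exact exp_eq_exp.mp (hGi h1 h2 huv)
  · intro t ht
    show (if (0:ℝ) ≤ t then φ (max t 0) else G (exp t)) = φ t
    rw [if_pos ht, max_eq_left ht]

/-- **Lemma 2.10.** Let `X` be a uniquely arcwise connected continuum and let
`φ : [0, ∞) → X` be a ray (a continuous injection). If there is an arc `[a, b]` in `X`
with `φ 0 ∈ (a, b)`, then the ray extends to a line: a continuous injection
`ψ : (−∞, ∞) → X` with `ψ t = φ t` for all `t ≥ 0`. -/
theorem ray_extends_to_line
    {X : Type*} [MetricSpace X] [CompactSpace X] [ConnectedSpace X] [Nonempty X]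
    (hX : UniquelyArcwiseConnected X)
    (φ : ℝ → X) (hφc : ContinuousOn φ (Set.Ici 0)) (hφi : Set.InjOn φ (Set.Ici 0))
    (a b : X) (A : Set X) (hA : IsArcBetween A a b)
    (h0 : φ 0 ∈ A \ {a, b}) :
    ∃ ψ : ℝ → X, Continuous ψ ∧ Function.Injective ψ ∧
      ∀ t : ℝ, 0 ≤ t → ψ t = φ t := by
  obtain ⟨f, hfc, hfi, hf0, hf1, hfr⟩ := hA
  obtain ⟨h0A, h0ab⟩ := h0
  rw [← hfr] at h0A
  obtain ⟨σ, hσ⟩ := h0A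
  set F : ℝ → X := fun t => f (Set.projIcc 0 1 zero_le_one t) with hF
  have hFc : Continuous F := hfc.comp continuous_projIcc
  have hFi : InjOn F (Icc 0 1) := by
    intro x hx y hy hxy
    have := hfi hxy
    rw [projIcc_of_mem _ hx, projIcc_of_mem _ hy] at this
    exact congrArg Subtype.val this
  set s0 : ℝ := (σ : ℝ) with hs0def
  have hFs : ∀ s : unitInterval, F (s : ℝ) = f s := by
    intro s
    simp [hF, projIcc_of_mem _ s.2]
  have hF0 : F s0 = φ 0 := by rw [hFs σ, hσ]
  have hs00 : 0 < s0 := by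
    rcases lt_or_eq_of_le σ.2.1 with h | h
    · exact h
    · exfalso
      apply h0ab
      left
      rw [← hσ, ← hf0]
      congr 1
      exact Subtype.ext h.symm
  have hs01 : s0 < 1 := by
    rcases lt_or_eq_of_le σ.2.2 with h | h
    · exact h
    · exfalso
      apply h0ab
      right
      rw [← hσ, ← hf1]
      congr 1
      exact Subtype.ext h
  -- Key dichotomy: one side of the arc misses the ray
  have key : (∀ s ∈ Ico (0:ℝ) s0, ∀ t : ℝ, 0 ≤ t → F s ≠ φ t) ∨
      (∀ s ∈ Ioc s0 1, ∀ t : ℝ, 0 ≤ t → F s ≠ φ t) := by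
    by_contra hcon
    push_neg at hcon
    obtain ⟨⟨s1, hs1, t1, ht1, he1⟩, ⟨s2, hs2, t2, ht2, he2⟩⟩ := hcon
    -- t1, t2 > 0
    have ht1' : 0 < t1 := by
      rcases lt_or_eq_of_le ht1 with h | h
      · exact h
      · exfalso
        have : F s1 = F s0 := by rw [he1, ← h, hF0]
        have := hFi ⟨hs1.1, le_of_lt (lt_of_lt_of_le hs1.2 hs01.le)⟩
          ⟨hs00.le, hs01.le⟩ this
        exact absurd this (ne_of_lt hs1.2)
    have ht2' : 0 < t2 := by
      rcases lt_or_eq_of_le ht2 with h | h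
      · exact h
      · exfalso
        have : F s2 = F s0 := by rw [he2, ← h, hF0]
        have := hFi ⟨le_of_lt (lt_of_le_of_lt hs00.le hs2.1), hs2.2⟩
          ⟨hs00.le, hs01.le⟩ this
        exact absurd this.symm (ne_of_lt hs2.1)
    have hs12 : s1 < s2 := lt_trans hs1.2 hs2.1
    have hmemcc : Icc s1 s2 ⊆ Icc (0:ℝ) 1 :=
      Icc_subset_Icc hs1.1 hs2.2
    -- Arc along F
    have arcF : IsArcBetween (F '' Icc s1 s2) (F s1) (F s2) :=
      isArcBetween_of_injOn F s1 s2 hs12 (hFc.continuousOn) (hFi.mono hmemcc)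
    have hxy : F s1 ≠ F s2 := by
      intro h
      have := hFi (hmemcc ⟨le_refl s1, hs12.le⟩) (hmemcc ⟨hs12.le, le_refl s2⟩) h
      exact absurd this (ne_of_lt hs12)
    have ht12 : t1 ≠ t2 := by
      intro h
      apply hxy
      rw [he1, he2, h]
    -- The φ-arc between φ t1 and φ t2 misses φ 0
    have harcmiss : ∀ p q : ℝ, 0 < p → p < q → φ 0 ∉ φ '' Icc p q := by
      rintro p q hp hpq ⟨t, htmem, hteq⟩
      have : t = 0 := hφi (le_of_lt (lt_of_lt_of_le hp htmem.1) : t ∈ Ici (0:ℝ))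
        (le_refl (0:ℝ)) hteq
      rw [this] at htmem
      linarith [htmem.1]
    -- φ 0 is in the F-arc
    have h0in : φ 0 ∈ F '' Icc s1 s2 := by
      rw [← hF0]
      exact Set.mem_image_of_mem F ⟨hs1.2.le, hs2.1.le⟩
    -- Unique arc
    rcases lt_or_gt_of_ne ht12 with h | h
    · have arcφ : IsArcBetween (φ '' Icc t1 t2) (φ t1) (φ t2) := by
        apply isArcBetween_of_injOn φ t1 t2 h
        · exact hφc.mono (fun x hx => le_trans ht1 hx.1)
        · exact hφi.mono (fun x hx => le_trans ht1 hx.1)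
      rw [← he1, ← he2] at arcφ
      obtain ⟨B, _, hBuniq⟩ := hX (F s1) (F s2) hxy
      have e1 := hBuniq _ arcF
      have e2 := hBuniq _ arcφ
      rw [e1, ← e2] at h0in
      exact harcmiss t1 t2 ht1' h h0in
    · have arcφ : IsArcBetween (φ '' Icc t2 t1) (φ t2) (φ t1) := by
        apply isArcBetween_of_injOn φ t2 t1 h
        · exact hφc.mono (fun x hx => le_trans ht2 hx.1)
        · exact hφi.mono (fun x hx => le_trans ht2 hx.1)
      rw [← he1, ← he2] at arcφ
      have arcφ' := arcφ.symm
      obtain ⟨B, _, hBuniq⟩ := hX (F s1) (F s2) hxy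
      have e1 := hBuniq _ arcF
      have e2 := hBuniq _ arcφ'
      rw [e1, ← e2] at h0in
      exact harcmiss t2 t1 ht2' h h0in
  rcases key with hside | hside
  · -- use G s = F (s0 * s)
    apply build_line φ hφc hφi (fun s => F (s0 * s))
    · exact hFc.comp (continuous_const.mul continuous_id)
    · intro x hx y hy hxy
      have hx' : s0 * x ∈ Icc (0:ℝ) 1 :=
        ⟨by nlinarith [hx.1], by nlinarith [hx.1, hx.2]⟩
      have hy' : s0 * y ∈ Icc (0:ℝ) 1 :=
        ⟨by nlinarith [hy.1], by nlinarith [hy.1, hy.2]⟩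
      have := hFi hx' hy' hxy
      exact mul_left_cancel₀ (ne_of_gt hs00) this
    · rw [mul_one]; exact hF0
    · intro s hs t ht
      exact hside (s0 * s) ⟨by nlinarith [hs.1], by nlinarith [hs.1, hs.2]⟩ t ht
  · -- use G s = F (1 - (1 - s0) * s)
    apply build_line φ hφc hφi (fun s => F (1 - (1 - s0) * s))
    · exact hFc.comp (continuous_const.sub (continuous_const.mul continuous_id))
    · intro x hx y hy hxy
      have hx' : 1 - (1 - s0) * x ∈ Icc (0:ℝ) 1 :=
        ⟨by nlinarith [hx.1, hx.2], by nlinarith [hx.1]⟩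
      have hy' : 1 - (1 - s0) * y ∈ Icc (0:ℝ) 1 :=
        ⟨by nlinarith [hy.1, hy.2], by nlinarith [hy.1]⟩
      have h1 := hFi hx' hy' hxy
      have h2 : (1 - s0) * x = (1 - s0) * y := by linarith
      exact mul_left_cancel₀ (by linarith : (1:ℝ) - s0 ≠ 0) h2
    · rw [mul_one]
      have : (1:ℝ) - (1 - s0) = s0 := by ring
      rw [this]; exact hF0
    · intro s hs t ht
      exact hside (1 - (1 - s0) * s) ⟨by nlinarith [hs.1, hs.2], by nlinarith [hs.1]⟩ t ht
end

section
/- With X, T, and the metric d as in the standing construction, the metric completion (T̄, d) of (T, d) is compact. -/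
/-- A dendrite: a (metrizable) continuum which is locally connected and uniquely
arcwise connected. -/
def IsDendrite (X : Type*) [TopologicalSpace X] : Prop :=
  Nonempty X ∧ CompactSpace X ∧ ConnectedSpace X ∧
    TopologicalSpace.MetrizableSpace X ∧ LocallyConnectedSpace X ∧
    UniquelyArcwiseConnected X

/-- A subset `Y` of `X` is a tree: it is a dendrite (with the subspace topology)
which is the union of finitely many arcs. -/
def IsTree {X : Type*} [TopologicalSpace X] (Y : Set X) : Prop :=
  IsDendrite Y ∧ ∃ (n : ℕ) (A : Fin n → Set X), (∀ i, IsArc (A i)) ∧ Y = ⋃ i, A i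

/-- The arc `[x, y]` in a uniquely arcwise connected space (`{x}` if `x = y`). -/
noncomputable def arcOf {X : Type*} [TopologicalSpace X]
    (hX : UniquelyArcwiseConnected X) (x y : X) : Set X :=
  letI : Decidable (x = y) := Classical.dec _
  if h : x = y then {x} else (hX x y h).choose

/-- The standing construction: in a uniquely arcwise connected continuum `X`, a strictly
increasing sequence of trees `T n = I 0 ∪ ... ∪ I n` built from arcs `I i` meeting
pairwise in at most a point, together with homeomorphisms `h i : I i → [0,1]`. -/
structure StandingConstruction (X : Type*) [MetricSpace X] where
  /-- `X` is uniquely arcwise connected. -/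
  huac : UniquelyArcwiseConnected X
  /-- the arcs `I i` -/
  I : ℕ → Set X
  arc_I : ∀ i, IsArc (I i)
  /-- distinct arcs meet in at most one point -/
  inter_I : ∀ i j, i ≠ j → (I i ∩ I j).Subsingleton
  /-- each partial union `T n = ⋃_{i ≤ n} I i` is a tree -/
  tree_T : ∀ n : ℕ, IsTree (⋃ i ≤ n, I i)
  /-- the sequence of trees is strictly increasing -/
  strict_T : ∀ n : ℕ, (⋃ i ≤ n, I i) ⊂ ⋃ i ≤ n + 1, I i
  /-- the homeomorphisms `h i : I i → [0,1]` -/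
  h : ℕ → X → ℝ
  h_cont : ∀ i, ContinuousOn (h i) (I i)
  h_inj : ∀ i, Set.InjOn (h i) (I i)
  h_image : ∀ i, h i '' I i = Set.Icc (0 : ℝ) 1

/-- The tree `T n` of the standing construction. -/
def StandingConstruction.Tn {X : Type*} [MetricSpace X]
    (sc : StandingConstruction X) (n : ℕ) : Set X :=
  ⋃ i ≤ n, sc.I i

/-- The set `T = ⋃ n T n` of the standing construction. -/
def StandingConstruction.T {X : Type*} [MetricSpace X]
    (sc : StandingConstruction X) : Set X :=
  ⋃ i, sc.I i

/-- The metric `d(x,y) = ∑ i 2^{-(i+1)} l(h i ([x,y] ∩ I i))` of the standing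
construction, where `l` is the length (diameter) of a subinterval of `[0,1]`. -/
noncomputable def StandingConstruction.d {X : Type*} [MetricSpace X]
    (sc : StandingConstruction X) (x y : X) : ℝ :=
  ∑' i : ℕ, (2 : ℝ)⁻¹ ^ (i + 1) *
    Metric.diam (sc.h i '' (arcOf sc.huac x y ∩ sc.I i))


section ArcHelpers

open Set

variable {W : Type*} [TopologicalSpace W]

theorem isArcBetween_symm' {A : Set W} {x y : W} (h : IsArcBetween A x y) :
    IsArcBetween A y x := by
  obtain ⟨f, hc, hi, h0, h1, hr⟩ := h
  refine ⟨f ∘ unitInterval.symm, hc.comp unitInterval.continuous_symm,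
    hi.comp unitInterval.symm_involutive.injective, ?_, ?_, ?_⟩
  · simp [Function.comp, unitInterval.symm_zero, h1]
  · simp [Function.comp, unitInterval.symm_one, h0]
  · rw [Set.range_comp, unitInterval.symm_involutive.surjective.range_eq, Set.image_univ, hr]

theorem arcOf_self (hX : UniquelyArcwiseConnected W) (x : W) : arcOf hX x x = {x} := by
  unfold arcOf
  split
  · rfl
  · exact absurd rfl ‹x ≠ x›

theorem arcOf_isArcBetween (hX : UniquelyArcwiseConnected W) {x y : W} (h : x ≠ y) :
    IsArcBetween (arcOf hX x y) x y := by
  unfold arcOf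
  split
  · exact absurd ‹x = y› h
  · exact (hX x y ‹x ≠ y›).choose_spec.1

theorem arcOf_eq (hX : UniquelyArcwiseConnected W) {A : Set W} {x y : W} (h : x ≠ y)
    (hA : IsArcBetween A x y) : arcOf hX x y = A := by
  unfold arcOf
  split
  · exact absurd ‹x = y› h
  · exact ((hX x y ‹x ≠ y›).choose_spec.2 A hA).symm

theorem isArcBetween_image_Icc {f : unitInterval → W} (hc : Continuous f)
    (hi : Function.Injective f) {a b : unitInterval} (hab : a < b) :
    IsArcBetween (f '' Set.Icc a b) (f a) (f b) := by
  have hab' : (a : ℝ) < (b : ℝ) := hab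
  have hmem : ∀ t : unitInterval, (1 - (t:ℝ)) * a + t * b ∈ unitInterval := by
    intro t
    have h1 := t.2.1; have h2 := t.2.2
    have ha1 := a.2.1; have ha2 := a.2.2
    have hb1 := b.2.1; have hb2 := b.2.2
    constructor
    · nlinarith
    · nlinarith
  set e : unitInterval → unitInterval := fun t => ⟨(1 - (t:ℝ)) * a + t * b, hmem t⟩ with he
  have hec : Continuous e := by
    apply Continuous.subtype_mk
    fun_prop
  have hei : Function.Injective e := by
    intro s t hst
    have h1 : (1 - (s:ℝ)) * a + s * b = (1 - (t:ℝ)) * a + t * b := congrArg Subtype.val hst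
    have h2 : ((s:ℝ) - (t:ℝ)) * ((b:ℝ) - (a:ℝ))
        = ((1 - (s:ℝ)) * a + s * b) - ((1 - (t:ℝ)) * a + t * b) := by ring
    rw [h1, sub_self] at h2
    rcases mul_eq_zero.1 h2 with h | h
    · exact Subtype.ext (by linarith)
    · exact absurd h (by intro hh; linarith)
  have he0 : e 0 = a := Subtype.ext (by simp [he])
  have he1 : e 1 = b := Subtype.ext (by simp [he])
  have her : Set.range e = Set.Icc a b := by
    ext s
    constructor
    · rintro ⟨t, rfl⟩
      have h1 := t.2.1; have h2 := t.2.2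
      constructor
      · rw [← Subtype.coe_le_coe]
        show (a:ℝ) ≤ (1 - (t:ℝ)) * a + t * b
        nlinarith
      · rw [← Subtype.coe_le_coe]
        show (1 - (t:ℝ)) * a + t * b ≤ (b:ℝ)
        nlinarith
    · intro hs
      have hs1 : (a:ℝ) ≤ (s:ℝ) := hs.1
      have hs2 : (s:ℝ) ≤ (b:ℝ) := hs.2
      have hba : (b:ℝ) - (a:ℝ) ≠ 0 := by linarith
      have hmem' : ((s:ℝ) - a) / ((b:ℝ) - a) ∈ unitInterval := by
        constructor
        · exact div_nonneg (by linarith) (by linarith)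
        · rw [div_le_one (by linarith)]; linarith
      refine ⟨⟨_, hmem'⟩, Subtype.ext ?_⟩
      show (1 - ((s:ℝ) - a) / ((b:ℝ) - a)) * a + (((s:ℝ) - a)/((b:ℝ) - a)) * b = (s:ℝ)
      field_simp
      ring
  exact ⟨f ∘ e, hc.comp hec, hi.comp hei,
    by simp [Function.comp, he0], by simp [Function.comp, he1],
    by rw [Set.range_comp, her]⟩

theorem arcOf_param (hX : UniquelyArcwiseConnected W) {f : unitInterval → W}
    (hc : Continuous f) (hi : Function.Injective f) {a b : unitInterval} (hab : a ≠ b) :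
    arcOf hX (f a) (f b) = f '' Set.Icc (a ⊓ b) (a ⊔ b) := by
  rcases hab.lt_or_gt with h | h
  · rw [inf_eq_left.2 h.le, sup_eq_right.2 h.le]
    exact arcOf_eq hX (fun he => hab (hi he)) (isArcBetween_image_Icc hc hi h)
  · rw [inf_eq_right.2 h.le, sup_eq_left.2 h.le]
    exact arcOf_eq hX (fun he => hab (hi he))
      (isArcBetween_symm' (isArcBetween_image_Icc hc hi h))

end ArcHelpers

/-- **Claim A of Proposition 3.1.** The metric completion `(T̄, d)` of `(T, d)` from the
standing construction is compact. Here the completion is formalized as a complete metric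
space `Y` together with a map `ι : T → Y` which is isometric for `d` and has dense range. -/
theorem sc_completion_compact
    {X Y : Type*} [MetricSpace X] [CompactSpace X] [ConnectedSpace X] [Nonempty X]
    [MetricSpace Y] [CompleteSpace Y]
    (sc : StandingConstruction X) (ι : sc.T → Y)
    (hiso : ∀ a b : sc.T, dist (ι a) (ι b) = sc.d a b)
    (hdense : DenseRange ι) :
    CompactSpace Y := by
  -- parametrizations of the arcs
  have harc : ∀ i, ∃ f : unitInterval → X,
      Continuous f ∧ Function.Injective f ∧ Set.range f = sc.I i := by
    intro i
    obtain ⟨x, y, f, hcf, hif, -, -, hrf⟩ := sc.arc_I i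
    exact ⟨f, hcf, hif, hrf⟩
  choose g hgc hgi hgr using harc
  have hIT : ∀ i, sc.I i ⊆ sc.T := fun i => Set.subset_iUnion sc.I i
  have hgI : ∀ i t, g i t ∈ sc.I i := fun i t => by
    rw [← hgr i]; exact Set.mem_range_self t
  have hgT : ∀ i t, g i t ∈ sc.T := fun i t => hIT i (hgI i t)
  have hIcomp : ∀ i, IsCompact (sc.I i) := fun i => by
    rw [← hgr i]; exact isCompact_range (hgc i)
  -- bounds on diameters
  have hdnn : ∀ (x y : X) (i : ℕ),
      0 ≤ Metric.diam (sc.h i '' (arcOf sc.huac x y ∩ sc.I i)) := fun _ _ _ => Metric.diam_nonneg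
  have hdle1 : ∀ (x y : X) (i : ℕ),
      Metric.diam (sc.h i '' (arcOf sc.huac x y ∩ sc.I i)) ≤ 1 := by
    intro x y i
    have hsub : sc.h i '' (arcOf sc.huac x y ∩ sc.I i) ⊆ Set.Icc (0:ℝ) 1 := by
      rw [← sc.h_image i]; exact Set.image_mono Set.inter_subset_right
    calc Metric.diam (sc.h i '' (arcOf sc.huac x y ∩ sc.I i))
        ≤ Metric.diam (Set.Icc (0:ℝ) 1) := Metric.diam_mono hsub (Metric.isBounded_Icc 0 1)
      _ = 1 := by rw [Real.diam_Icc zero_le_one]; norm_num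
  have hgeom : Summable (fun i : ℕ => (2:ℝ)⁻¹ ^ (i+1)) := by
    have := (summable_geometric_of_lt_one (by norm_num : (0:ℝ) ≤ 2⁻¹)
      (by norm_num : (2:ℝ)⁻¹ < 1)).mul_right 2⁻¹
    simpa [pow_succ] using this
  have hsumm : ∀ x y : X, Summable (fun i : ℕ =>
      (2:ℝ)⁻¹ ^ (i+1) * Metric.diam (sc.h i '' (arcOf sc.huac x y ∩ sc.I i))) := by
    intro x y
    refine Summable.of_nonneg_of_le (fun i => mul_nonneg (by positivity) (hdnn x y i))
      (fun i => ?_) hgeom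
    calc (2:ℝ)⁻¹ ^ (i+1) * Metric.diam (sc.h i '' (arcOf sc.huac x y ∩ sc.I i))
        ≤ (2:ℝ)⁻¹ ^ (i+1) * 1 :=
          mul_le_mul_of_nonneg_left (hdle1 x y i) (by positivity)
      _ = (2:ℝ)⁻¹ ^ (i+1) := mul_one _
  -- the key total boundedness estimate
  have key : ∀ ε > (0:ℝ), ∃ t : Set Y, t.Finite ∧ Set.range ι ⊆ ⋃ y ∈ t, Metric.ball y ε := by
    classical
    intro ε hε
    obtain ⟨N, hN⟩ := exists_pow_lt_of_lt_one (by positivity : (0:ℝ) < ε/2)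
      (by norm_num : (2:ℝ)⁻¹ < 1)
    have hITN : ∀ i, i ≤ N → sc.I i ⊆ sc.Tn N := by
      intro i hi x hx
      exact Set.mem_biUnion hi hx
    have hTNcomp : IsCompact (sc.Tn N) := by
      have hEq : sc.Tn N = ⋃ i ∈ Set.Iic N, sc.I i := rfl
      rw [hEq]
      exact (Set.finite_Iic N).isCompact_biUnion (fun i _ => hIcomp i)
    have hTNcl : IsClosed (sc.Tn N) := hTNcomp.isClosed
    -- first hitting point of T_N along any arc from x
    have hit : ∀ x ∈ sc.T, ∃ r ∈ sc.Tn N, arcOf sc.huac x r ∩ sc.Tn N ⊆ {r} := by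
      intro x hx
      by_cases hxT : x ∈ sc.Tn N
      · refine ⟨x, hxT, ?_⟩
        rw [arcOf_self]
        exact Set.inter_subset_left
      · have hpTN : g 0 0 ∈ sc.Tn N := hITN 0 (Nat.zero_le N) (hgI 0 0)
        have hxp : x ≠ g 0 0 := fun h => hxT (h ▸ hpTN)
        obtain ⟨f, hfc, hfi, hf0, hf1, hfr⟩ := arcOf_isArcBetween sc.huac hxp
        have hSne : (f ⁻¹' sc.Tn N).Nonempty := ⟨1, by
          simp only [Set.mem_preimage, hf1]; exact hpTN⟩
        have hScomp : IsCompact (f ⁻¹' sc.Tn N) := (hTNcl.preimage hfc).isCompact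
        obtain ⟨t0, ht0S, ht0lb⟩ := hScomp.exists_isLeast hSne
        have ht0T : f t0 ∈ sc.Tn N := ht0S
        have ht00 : t0 ≠ 0 := by
          intro h
          apply hxT
          rw [h] at ht0T
          rwa [hf0] at ht0T
        have h0t0 : (0:unitInterval) < t0 := lt_of_le_of_ne unitInterval.nonneg' (Ne.symm ht00)
        refine ⟨f t0, ht0T, ?_⟩
        have harc' : arcOf sc.huac x (f t0) = f '' Set.Icc 0 t0 := by
          rw [← hf0, arcOf_param sc.huac hfc hfi (ne_of_lt h0t0),
            inf_eq_left.2 h0t0.le, sup_eq_right.2 h0t0.le]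
        rw [harc']
        rintro u ⟨⟨s, hs, rfl⟩, huT⟩
        have hst0 : s = t0 := le_antisymm hs.2 (ht0lb huT)
        rw [hst0]
        exact Set.mem_singleton _
    -- distance from x to its hitting point
    have hdist1 : ∀ x ∈ sc.T, ∀ r : X, (arcOf sc.huac x r ∩ sc.Tn N ⊆ {r}) →
        sc.d x r ≤ (2:ℝ)⁻¹ ^ N := by
      intro x hx r hsub
      set u : ℕ → ℝ := fun i => (2:ℝ)⁻¹ ^ (i+1) *
        Metric.diam (sc.h i '' (arcOf sc.huac x r ∩ sc.I i)) with hu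
      have hu0 : ∀ i ≤ N, u i = 0 := by
        intro i hi
        have hsub2 : arcOf sc.huac x r ∩ sc.I i ⊆ {r} :=
          fun z hz => hsub ⟨hz.1, hITN i hi hz.2⟩
        have hss : (arcOf sc.huac x r ∩ sc.I i).Subsingleton :=
          Set.subsingleton_singleton.anti hsub2
        rw [hu]
        simp only []
        rw [Metric.diam_subsingleton (hss.image _), mul_zero]
      have hsu : Summable u := hsumm x r
      have heq := Summable.sum_add_tsum_nat_add (N+1) hsu
      have hzero : ∑ i ∈ Finset.range (N+1), u i = 0 :=
        Finset.sum_eq_zero (fun i hi => hu0 i (Nat.lt_succ_iff.1 (Finset.mem_range.1 hi)))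
      have hvsum : Summable (fun i : ℕ => (2:ℝ)⁻¹ ^ (N+2) * (2:ℝ)⁻¹ ^ i) :=
        (summable_geometric_of_lt_one (by norm_num) (by norm_num)).mul_left _
      have htail : ∑' i : ℕ, u (i + (N+1)) ≤ ∑' i : ℕ, (2:ℝ)⁻¹ ^ (N+2) * (2:ℝ)⁻¹ ^ i := by
        refine Summable.tsum_le_tsum (fun i => ?_) ((summable_nat_add_iff (N+1)).2 hsu) hvsum
        have h1 : u (i + (N+1)) ≤ (2:ℝ)⁻¹ ^ (i + (N+1) + 1) := by
          rw [hu]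
          calc (2:ℝ)⁻¹ ^ (i + (N+1) + 1) *
              Metric.diam (sc.h (i + (N+1)) '' (arcOf sc.huac x r ∩ sc.I (i + (N+1))))
              ≤ (2:ℝ)⁻¹ ^ (i + (N+1) + 1) * 1 :=
                mul_le_mul_of_nonneg_left (hdle1 x r _) (by positivity)
            _ = (2:ℝ)⁻¹ ^ (i + (N+1) + 1) := mul_one _
        calc u (i + (N+1)) ≤ (2:ℝ)⁻¹ ^ (i + (N+1) + 1) := h1
          _ = (2:ℝ)⁻¹ ^ (N+2) * (2:ℝ)⁻¹ ^ i := by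
              rw [← pow_add]
              congr 1
              omega
      have hval : ∑' i : ℕ, (2:ℝ)⁻¹ ^ (N+2) * (2:ℝ)⁻¹ ^ i = (2:ℝ)⁻¹ ^ (N+1) := by
        rw [tsum_mul_left, tsum_geometric_of_lt_one (by norm_num) (by norm_num), pow_succ,
          mul_assoc]
        norm_num
      have hdeq : sc.d x r = ∑' i, u i := by rw [hu]; rfl
      rw [hdeq, ← heq, hzero, zero_add]
      calc ∑' i : ℕ, u (i + (N+1)) ≤ ∑' i : ℕ, (2:ℝ)⁻¹ ^ (N+2) * (2:ℝ)⁻¹ ^ i := htail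
        _ = (2:ℝ)⁻¹ ^ (N+1) := hval
        _ ≤ (2:ℝ)⁻¹ ^ N := pow_le_pow_of_le_one (by norm_num) (by norm_num) (Nat.le_succ N)
    -- uniform continuity of h i ∘ g i
    have hFc : ∀ i, Continuous fun t : unitInterval => sc.h i (g i t) := fun i =>
      (sc.h_cont i).comp_continuous (hgc i) (fun t => hgI i t)
    have hδ : ∀ i, ∃ δ, 0 < δ ∧ ∀ s t : unitInterval, dist s t < δ →
        dist (sc.h i (g i s)) (sc.h i (g i t)) < ε/2 := by
      intro i
      obtain ⟨δ, hδ0, hδ'⟩ := Metric.uniformContinuous_iff.1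
        (CompactSpace.uniformContinuous_of_continuous (hFc i)) (ε/2) (by positivity)
      exact ⟨δ, hδ0, fun s t hst => hδ' hst⟩
    choose δ hδpos hδS using hδ
    have hne : (Finset.range (N+1)).Nonempty := ⟨0, Finset.mem_range.2 (Nat.succ_pos N)⟩
    set δ0 := (Finset.range (N+1)).inf' hne δ with hδ0def
    have hδ0pos : 0 < δ0 := (Finset.lt_inf'_iff hne).2 (fun i _ => hδpos i)
    have hδ0le : ∀ i ≤ N, δ0 ≤ δ i := fun i hi =>
      Finset.inf'_le δ (Finset.mem_range.2 (Nat.lt_succ_of_le hi))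
    obtain ⟨M, hM⟩ := exists_nat_gt (2 / δ0)
    have hM0 : (0:ℝ) < M := lt_trans (by positivity) hM
    have hMδ : 1 / (M:ℝ) < δ0 := by
      rw [div_lt_iff₀ hM0]
      have h2 : 2 < δ0 * M := by rwa [← div_lt_iff₀' hδ0pos]
      linarith
    -- the net
    have hqmem : ∀ p : ℕ × ℕ, min ((p.2:ℝ)/M) 1 ∈ unitInterval := by
      intro p
      exact ⟨le_min (by positivity) zero_le_one, min_le_right _ _⟩
    set q : ℕ × ℕ → sc.T := fun p =>
      ⟨g p.1 ⟨min ((p.2:ℝ)/M) 1, hqmem p⟩, hgT p.1 _⟩ with hqdef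
    refine ⟨↑((Finset.range (N+1) ×ˢ Finset.range (M+1)).image fun p => ι (q p)),
      Finset.finite_toSet _, ?_⟩
    rintro z ⟨x, rfl⟩
    obtain ⟨r, hrTN, hrsub⟩ := hit ↑x x.2
    have hex : ∃ i, i ≤ N ∧ r ∈ sc.I i := by
      have h' := hrTN
      simp only [StandingConstruction.Tn, Set.mem_iUnion] at h'
      obtain ⟨i, hi, hri⟩ := h'
      exact ⟨i, hi, hri⟩
    obtain ⟨i, hiN, hri⟩ := hex
    obtain ⟨a, ha⟩ : ∃ a, g i a = r := by rw [← hgr i] at hri; exact hri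
    set k : ℕ := ⌊(a:ℝ) * M⌋₊ with hkdef
    have ha0 : (0:ℝ) ≤ (a:ℝ) * M := mul_nonneg a.2.1 hM0.le
    have hk1 : (k:ℝ) ≤ (a:ℝ) * M := Nat.floor_le ha0
    have hk2 : (a:ℝ) * M < k + 1 := Nat.lt_floor_add_one _
    have hkM : (k:ℝ) ≤ (M:ℝ) := le_trans hk1 (by nlinarith [a.2.2])
    have hkM' : k ≤ M := by exact_mod_cast hkM
    have hkM1 : (k:ℝ)/M ≤ 1 := by rw [div_le_one hM0]; exact hkM
    set b : unitInterval := ⟨min ((k:ℝ)/M) 1, hqmem (i, k)⟩ with hbdef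
    have hbval : (b:ℝ) = (k:ℝ)/M := min_eq_left hkM1
    have hba : (b:ℝ) ≤ (a:ℝ) := by rw [hbval, div_le_iff₀ hM0]; exact hk1
    have hab1 : (a:ℝ) - (b:ℝ) < 1/M := by
      have h3 : (a:ℝ) < ((k:ℝ)+1)/M := by rw [lt_div_iff₀ hM0]; exact hk2
      have h4 : ((k:ℝ)+1)/M = (k:ℝ)/M + 1/M := add_div _ _ _
      rw [hbval]
      linarith
    have hmem_net : ι (q (i,k)) ∈ (Finset.range (N+1) ×ˢ Finset.range (M+1)).image
        (fun p => ι (q p)) :=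
      Finset.mem_image_of_mem _ (Finset.mem_product.2
        ⟨Finset.mem_range.2 (Nat.lt_succ_of_le hiN), Finset.mem_range.2 (Nat.lt_succ_of_le hkM')⟩)
    -- distance from r to the net point
    have hdist2 : sc.d r (g i b) ≤ ε/2 := by
      by_cases hab : a = b
      · have hreq : r = g i b := by rw [← ha, hab]
        rw [← hreq]
        have hzero' : sc.d r r = 0 := by
          have hterm : ∀ j : ℕ, (2:ℝ)⁻¹ ^ (j+1) *
              Metric.diam (sc.h j '' (arcOf sc.huac r r ∩ sc.I j)) = 0 := by
            intro j
            have hss : (arcOf sc.huac r r ∩ sc.I j).Subsingleton := by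
              rw [arcOf_self]
              exact Set.subsingleton_singleton.anti Set.inter_subset_left
            rw [Metric.diam_subsingleton (hss.image _), mul_zero]
          calc sc.d r r = ∑' j : ℕ, ((2:ℝ)⁻¹ ^ (j+1) *
                Metric.diam (sc.h j '' (arcOf sc.huac r r ∩ sc.I j))) := rfl
            _ = ∑' _ : ℕ, (0:ℝ) := tsum_congr hterm
            _ = 0 := tsum_zero
        rw [hzero']
        positivity
      · have hrb : arcOf sc.huac r (g i b) = g i '' Set.Icc (a ⊓ b) (a ⊔ b) := by
          rw [← ha]
          exact arcOf_param sc.huac (hgc i) (hgi i) hab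
        have hAI : g i '' Set.Icc (a ⊓ b) (a ⊔ b) ⊆ sc.I i := by
          rw [← hgr i]; exact Set.image_subset_range _ _
        have hterm0 : ∀ j : ℕ, j ≠ i → (2:ℝ)⁻¹ ^ (j+1) *
            Metric.diam (sc.h j '' (arcOf sc.huac r (g i b) ∩ sc.I j)) = 0 := by
          intro j hj
          have hss : (arcOf sc.huac r (g i b) ∩ sc.I j).Subsingleton := by
            apply (sc.inter_I i j (Ne.symm hj)).anti
            rw [hrb]
            exact Set.inter_subset_inter_left _ hAI
          rw [Metric.diam_subsingleton (hss.image _), mul_zero]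
        have hde : sc.d r (g i b) = (2:ℝ)⁻¹ ^ (i+1) *
            Metric.diam (sc.h i '' (arcOf sc.huac r (g i b) ∩ sc.I i)) :=
          tsum_eq_single i hterm0
        have hba' : b ≤ a := Subtype.coe_le_coe.1 hba
        have hinf : a ⊓ b = b := inf_eq_right.2 hba'
        have hsup : a ⊔ b = a := sup_eq_left.2 hba'
        have hdiam : Metric.diam (sc.h i '' (arcOf sc.huac r (g i b) ∩ sc.I i)) ≤ ε/2 := by
          apply Metric.diam_le_of_forall_dist_le (by positivity)
          rintro u hu v hv
          rw [hrb] at hu hv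
          obtain ⟨zu, hzu, rfl⟩ := hu
          obtain ⟨⟨s, hsI, rfl⟩, -⟩ := hzu
          obtain ⟨zv, hzv, rfl⟩ := hv
          obtain ⟨⟨t, htI, rfl⟩, -⟩ := hzv
          have hsmem : (s:ℝ) ∈ Set.Icc ((b:ℝ)) ((a:ℝ)) :=
            ⟨Subtype.coe_le_coe.2 (hinf ▸ hsI.1), Subtype.coe_le_coe.2 (hsup ▸ hsI.2)⟩
          have htmem : (t:ℝ) ∈ Set.Icc ((b:ℝ)) ((a:ℝ)) :=
            ⟨Subtype.coe_le_coe.2 (hinf ▸ htI.1), Subtype.coe_le_coe.2 (hsup ▸ htI.2)⟩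
          have hdst : dist s t ≤ (a:ℝ) - (b:ℝ) := by
            rw [Subtype.dist_eq]
            exact Real.dist_le_of_mem_Icc hsmem htmem
          have hlt : dist s t < δ i := by
            have := hδ0le i hiN
            linarith
          exact (hδS i s t hlt).le
        rw [hde]
        calc (2:ℝ)⁻¹ ^ (i+1) *
            Metric.diam (sc.h i '' (arcOf sc.huac r (g i b) ∩ sc.I i))
            ≤ 1 * (ε/2) :=
              mul_le_mul (pow_le_one₀ (by norm_num) (by norm_num)) hdiam
                (hdnn _ _ _) zero_le_one
          _ = ε/2 := one_mul _
    -- combine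
    have hrT : r ∈ sc.T := hIT i hri
    have hbound1 : dist (ι x) (ι ⟨r, hrT⟩) < ε/2 := by
      rw [hiso]
      calc sc.d ↑x r ≤ (2:ℝ)⁻¹ ^ N := hdist1 ↑x x.2 r hrsub
        _ < ε/2 := hN
    have hbound2 : dist (ι ⟨r, hrT⟩) (ι (q (i,k))) ≤ ε/2 := by
      rw [hiso]
      exact hdist2
    apply Set.mem_biUnion (Finset.mem_coe.2 hmem_net)
    rw [Metric.mem_ball]
    calc dist (ι x) (ι (q (i,k)))
        ≤ dist (ι x) (ι ⟨r, hrT⟩) + dist (ι ⟨r, hrT⟩) (ι (q (i,k))) := dist_triangle _ _ _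
      _ < ε/2 + ε/2 := add_lt_add_of_lt_of_le hbound1 hbound2
      _ = ε := by ring
  -- conclude compactness
  have htb : TotallyBounded (Set.range ι) := Metric.totallyBounded_iff.2 key
  have htb2 : TotallyBounded (Set.univ : Set Y) := by
    have h1 := htb.closure
    rwa [hdense.closure_range] at h1
  have hcomp : IsCompact (Set.univ : Set Y) :=
    isCompact_iff_totallyBounded_isComplete.2
      ⟨htb2, completeSpace_iff_isComplete_univ.1 ‹CompleteSpace Y›⟩
  exact ⟨hcomp⟩
end

section
/- In the setting of the induced action (G countable acting on a uniquely arcwise connected continuum X, p ∈ X, T = [Gp] = ⋃_n T_n with the convex metric d of the standing construction, and (T̄, d) the completion of (T, d)), for every g ∈ G the unique continuous extension ḡ : (T̄, d) → (T̄, d) of g is a homeomorphism; in particular ḡ is injective, and g ↦ ḡ defines an action of G on the dendrite (T̄, d) by homeomorphisms. -/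
/-- A subset `S` of `X` is arcwise connected: any two distinct points of `S`
are joined by an arc contained in `S`. -/
def ArcwiseConnectedSet {X : Type*} [TopologicalSpace X] (S : Set X) : Prop :=
  ∀ x ∈ S, ∀ y ∈ S, x ≠ y → ∃ A : Set X, IsArcBetween A x y ∧ A ⊆ S

/-- The convex hull `[S]` of `S`: the intersection of all arcwise connected
subsets of `X` containing `S`. -/
def arcHull {X : Type*} [TopologicalSpace X] (S : Set X) : Set X :=
  ⋂₀ {C : Set X | S ⊆ C ∧ ArcwiseConnectedSet C}

/-- **Proposition 3.5.** In the setting of the induced action (a countable group `G`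
acting by homeomorphisms on a uniquely arcwise connected continuum `X`, `p ∈ X`,
`T = [Gp]` with trees `T n` which are hulls of finite orbit subsets, `(T̄, d)` the
completion of `(T, d)` formalized as a complete metric space `Y` with isometric
densely-ranged `ι : T → Y`), for every `g ∈ G` any continuous extension
`ḡ : T̄ → T̄` of `g` is a homeomorphism; in particular each `ḡ` is injective, and
`g ↦ ḡ` is an action of `G` on `(T̄, d)` by homeomorphisms. -/
theorem induced_action_extensions_are_homeomorphisms
    {G X Y : Type*} [Group G] [Countable G] [MetricSpace X] [CompactSpace X]
    [ConnectedSpace X] [Nonempty X] [MulAction G X]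
    [MetricSpace Y] [CompleteSpace Y]
    (hcont : ∀ g : G, Continuous fun x : X => g • x)
    (p : X) (sc : StandingConstruction X)
    (hT : sc.T = arcHull (MulAction.orbit G p))
    (hTn : ∀ n : ℕ, ∃ S : Finset X,
      (S : Set X) ⊆ MulAction.orbit G p ∧ sc.Tn n = arcHull (S : Set X))
    (hinv : ∀ g : G, ∀ x ∈ sc.T, g • x ∈ sc.T)
    (ι : sc.T → Y)
    (hiso : ∀ a b : sc.T, dist (ι a) (ι b) = sc.d a b)
    (hdense : DenseRange ι)
    (gbar : G → Y → Y)
    (hgc : ∀ g : G, Continuous (gbar g))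
    (hext : ∀ (g : G) (x : sc.T), gbar g (ι x) = ι ⟨g • (x : X), hinv g x x.2⟩) :
    (∀ g : G, ∃ H : Y ≃ₜ Y, ⇑H = gbar g) ∧
    (∀ g : G, Function.Injective (gbar g)) ∧
    gbar 1 = id ∧ (∀ g g' : G, gbar (g * g') = gbar g ∘ gbar g') := by
  have hdense' : Dense (Set.range ι) := hdense
  have hcomp : ∀ g g' : G, gbar (g * g') = gbar g ∘ gbar g' := by
    intro g g'
    refine Continuous.ext_on hdense' (hgc _) ((hgc g).comp (hgc g')) ?_
    rintro _ ⟨x, rfl⟩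
    simp only [Function.comp_apply, hext]
    congr 1
    exact Subtype.ext (mul_smul g g' (x : X))
  have hone : gbar 1 = id := by
    refine Continuous.ext_on hdense' (hgc 1) continuous_id ?_
    rintro _ ⟨x, rfl⟩
    rw [hext]
    simp only [id]
    congr 1
    exact Subtype.ext (one_smul G (x : X))
  have hinvl : ∀ g : G, gbar g ∘ gbar g⁻¹ = id := by
    intro g
    rw [← hcomp, mul_inv_cancel, hone]
  have hinvr : ∀ g : G, gbar g⁻¹ ∘ gbar g = id := by
    intro g
    rw [← hcomp, inv_mul_cancel, hone]
  refine ⟨?_, ?_, hone, hcomp⟩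
  · intro g
    exact ⟨{ toFun := gbar g, invFun := gbar g⁻¹,
             left_inv := fun y => congrFun (hinvr g) y,
             right_inv := fun y => congrFun (hinvl g) y,
             continuous_toFun := hgc g, continuous_invFun := hgc g⁻¹ }, rfl⟩
  · intro g
    exact Function.LeftInverse.injective (g := gbar g⁻¹) (fun y => congrFun (hinvr g) y)
end
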